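/- For arbitrary valuation functions v_i : Finset (Fin m) → ℝ and any allocation A, there exists a permutation π of Fin n such that the allocation i ↦ A_{π(i)} (assigning bundle A_{π(i)} to agent i) is envy-freeable. -/

import Mathlib

open List Equiv

/-- Weight of a walk starting at `i` and then visiting the vertices in `l` in order. -/
def walkW {n : ℕ} (w : Fin n → Fin n → ℝ) : Fin n → List (Fin n) → ℝ
  | _, [] => 0
  | i, k :: t => w i k + walkW w k t

lemma walkW_append {n : ℕ} (w : Fin n → Fin n → ℝ) (i : Fin n) (l1 l2 : List (Fin n)) :
    walkW w i (l1 ++ l2)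
      = walkW w i l1 + walkW w ((i :: l1).getLast (List.cons_ne_nil _ _)) l2 := by
  induction l1 generalizing i with
  | nil => simp [walkW]
  | cons a t ih =>
    have : (i :: a :: t).getLast (List.cons_ne_nil _ _)
        = (a :: t).getLast (List.cons_ne_nil _ _) := by
      rw [List.getLast_cons]
    rw [List.cons_append, walkW, walkW, ih a, this]
    ring

lemma walkW_replicate {n : ℕ} (w : Fin n → Fin n → ℝ) (hw : ∀ x, w x x = 0)
    (a : Fin n) (s : ℕ) : walkW w a (List.replicate s a) = 0 := by
  induction s with
  | zero => rfl
  | succ s ih => simp [List.replicate_succ, walkW, hw, ih]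

/-- Key computation: the weight of a walk along a nodup list, closing with an
edge to `z`, as a sum over the list's finset using `formPerm`. -/
lemma walkW_eq_sum_formPerm {n : ℕ} (w : Fin n → Fin n → ℝ) :
    ∀ (t : List (Fin n)) (b : Fin n), (b :: t).Nodup → ∀ z : Fin n,
      walkW w b (t ++ [z])
        = ∑ x ∈ (b :: t).toFinset,
            (if (b :: t).formPerm x = b then w x z else w x ((b :: t).formPerm x)) := by
  intro t
  induction t with
  | nil =>
    intro b _ z
    simp [walkW]
  | cons c t' ih =>
    intro b hnd z
    have hb : b ∉ c :: t' := by simpa using hnd.notMem  -- ?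
    have hnd' : (c :: t').Nodup := hnd.of_cons
    have hσ' : ∀ x ∈ c :: t', (c :: t').formPerm x ∈ c :: t' :=
      fun x hx => List.formPerm_apply_mem_of_mem hx
    have hfb : (b :: c :: t').formPerm b = c := by
      rw [List.formPerm_cons_cons, Equiv.Perm.mul_apply,
        List.formPerm_apply_of_notMem hb, Equiv.swap_apply_left]
    have hbc : b ≠ c := by
      intro h; exact hb (h ▸ List.mem_cons_self)
    have hbn : b ∉ (c :: t').toFinset := by simpa using hb
    rw [List.toFinset_cons, Finset.sum_insert hbn]
    have hstep : ∀ x ∈ (c :: t').toFinset,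
        (if (b :: c :: t').formPerm x = b then w x z else w x ((b :: c :: t').formPerm x))
          = (if (c :: t').formPerm x = c then w x z else w x ((c :: t').formPerm x)) := by
      intro x hx
      have hxl : x ∈ c :: t' := List.mem_toFinset.mp hx
      have hmem : (c :: t').formPerm x ∈ c :: t' := hσ' x hxl
      have hne : (c :: t').formPerm x ≠ b := fun h => hb (h ▸ hmem)
      rw [List.formPerm_cons_cons, Equiv.Perm.mul_apply]
      by_cases hc : (c :: t').formPerm x = c
      · rw [hc, Equiv.swap_apply_right]
        simp [hc]
      · rw [Equiv.swap_apply_of_ne_of_ne hne hc]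
        simp [hne, hc]
    rw [Finset.sum_congr rfl hstep, ← ih c hnd' z]
    have : walkW w b ((c :: t') ++ [z]) = w b c + walkW w c (t' ++ [z]) := rfl
    rw [this, hfb]
    rw [if_neg (fun h => hbc h.symm)]
  
lemma exists_nodup_prefix_dup {α : Type*} :
    ∀ (v : List α), ¬ v.Nodup → ∃ pre a post, v = pre ++ a :: post ∧ pre.Nodup ∧ a ∈ pre := by
  intro v
  induction v with
  | nil => intro h; exact absurd List.nodup_nil h
  | cons b t ih =>
    intro h
    by_cases ht : t.Nodup
    · have hb : b ∈ t := by
        by_contra hbt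
        exact h (List.nodup_cons.mpr ⟨hbt, ht⟩)
      obtain ⟨t1, t2, rfl⟩ := List.append_of_mem hb
      refine ⟨b :: t1, b, t2, by simp, ?_, List.mem_cons_self⟩
      have h1 : t1.Nodup := (ht.sublist (List.sublist_append_left _ _))
      have h2 : b ∉ t1 := by
        intro hbt1
        have := List.disjoint_of_nodup_append ht
        exact this hbt1 (List.mem_cons_self)
      exact List.nodup_cons.mpr ⟨h2, h1⟩
    · obtain ⟨pre, a, post, rfl, hpre, ha⟩ := ih ht
      by_cases hbp : b ∈ pre
      · obtain ⟨p1, p2, rfl⟩ := List.append_of_mem hbp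
        refine ⟨b :: p1, b, p2 ++ a :: post, by simp, ?_, List.mem_cons_self⟩
        have h1 : p1.Nodup := hpre.sublist (List.sublist_append_left _ _)
        have h2 : b ∉ p1 := by
          intro hb1
          exact (List.disjoint_of_nodup_append hpre) hb1 (List.mem_cons_self)
        exact List.nodup_cons.mpr ⟨h2, h1⟩
      · exact ⟨b :: pre, a, post, by simp, List.nodup_cons.mpr ⟨hbp, hpre⟩,
          List.mem_cons_of_mem _ ha⟩

theorem exists_envy_freeable_permutation
    (n m : ℕ) (hn : 1 ≤ n)
    (v : Fin n → Finset (Fin m) → ℝ)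
    (A : Fin n → Finset (Fin m))
    (hdisj : ∀ i k, i ≠ k → Disjoint (A i) (A k))
    (hcover : Finset.univ.biUnion A = Finset.univ) :
    ∃ π : Equiv.Perm (Fin n), ∃ p : Fin n → ℝ, (∀ i, 0 ≤ p i) ∧
      ∀ i k : Fin n, v i (A (π i)) + p i ≥ v i (A (π k)) + p k := by
  have hfin : Nonempty (Fin n) := ⟨⟨0, by omega⟩⟩
  -- choose a welfare-maximizing permutation
  obtain ⟨π, -, hπ⟩ := Finset.exists_max_image (Finset.univ : Finset (Equiv.Perm (Fin n)))
    (fun σ => ∑ i, v i (A (σ i))) ⟨1, Finset.mem_univ 1⟩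
  set w : Fin n → Fin n → ℝ := fun i k => v i (A (π k)) - v i (A (π i)) with hwdef
  have hw : ∀ x, w x x = 0 := fun x => by simp [hwdef]
  -- no positive cycles
  have hcyc : ∀ (a : Fin n) (ys : List (Fin n)), (a :: ys).Nodup →
      walkW w a (ys ++ [a]) ≤ 0 := by
    intro a ys hnd
    set σ := (a :: ys).formPerm with hσdef
    have hsum := walkW_eq_sum_formPerm w ys a hnd a
    have hsimp : ∀ x ∈ (a :: ys).toFinset,
        (if σ x = a then w x a else w x (σ x)) = w x (σ x) := by
      intro x hx
      by_cases h : σ x = a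
      · rw [h]; simp [h]
      · simp [h]
    rw [Finset.sum_congr rfl hsimp] at hsum
    have hfull : ∑ x ∈ (a :: ys).toFinset, w x (σ x) = ∑ x, w x (σ x) := by
      refine Finset.sum_subset (Finset.subset_univ _) ?_
      intro x _ hx
      have hxl : x ∉ a :: ys := fun h => hx (List.mem_toFinset.mpr h)
      rw [List.formPerm_apply_of_notMem hxl, hw]
    rw [hfull] at hsum
    rw [hsum]
    calc ∑ x, w x (σ x)
        = ∑ x, (v x (A ((σ.trans π) x)) - v x (A (π x))) :=
          Finset.sum_congr rfl fun x _ => rfl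
      _ = (∑ x, v x (A ((σ.trans π) x))) - ∑ x, v x (A (π x)) := Finset.sum_sub_distrib _ _
      _ ≤ 0 := sub_nonpos.mpr (hπ (σ.trans π) (Finset.mem_univ _))
  -- payments: maximum weight over walks of length exactly n
  have hne : (Finset.univ : Finset (Fin n → Fin n)).Nonempty := Finset.univ_nonempty
  set p : Fin n → ℝ :=
    fun i => Finset.sup' Finset.univ hne (fun t : Fin n → Fin n => walkW w i (List.ofFn t))
    with hpdef
  -- every walk's weight is at most p of its start
  have key : ∀ (N : ℕ) (l : List (Fin n)) (i : Fin n), l.length ≤ N → walkW w i l ≤ p i := by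
    intro N
    induction N with
    | zero =>
      intro l i hl
      have : l = [] := List.length_eq_zero_iff.mp (Nat.le_zero.mp hl)
      subst this
      have h0 : walkW w i (List.ofFn (fun _ : Fin n => i)) = 0 := by
        have : List.ofFn (fun _ : Fin n => i) = List.replicate n i := by
          simp [List.ofFn_const]
        rw [this, walkW_replicate w hw]
      calc walkW w i [] = walkW w i (List.ofFn (fun _ : Fin n => i)) := by
            rw [h0]; rfl
        _ ≤ p i := Finset.le_sup'
            (fun t : Fin n → Fin n => walkW w i (List.ofFn t)) (Finset.mem_univ _)
    | succ N ih =>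
      intro l i hl
      by_cases hln : l.length ≤ n
      · -- pad with self-loops to length exactly n
        set b := (i :: l).getLast (List.cons_ne_nil _ _) with hbdef
        set L := l ++ List.replicate (n - l.length) b with hLdef
        have hLlen : L.length = n := by simp [hLdef]; omega
        set t : Fin n → Fin n := fun j => L.get (Fin.cast hLlen.symm j) with htdef
        have hofn : List.ofFn t = L := by
          apply List.ext_get
          · simp [hLlen]
          · intro k h1 h2
            simp [htdef]
        have hval : walkW w i L = walkW w i l := by
          rw [hLdef, walkW_append, ← hbdef, walkW_replicate w hw, add_zero]
        calc walkW w i l = walkW w i (List.ofFn t) := by rw [hofn, hval]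
          _ ≤ p i := Finset.le_sup'
              (fun t : Fin n → Fin n => walkW w i (List.ofFn t)) (Finset.mem_univ _)
      · -- the walk visits more than n vertices: shorten it
        push_neg at hln
        have hnodup : ¬ (i :: l).Nodup := by
          intro h
          have := h.length_le_card
          simp at this
          omega
        obtain ⟨pre, a, post, hv, hpre, hapre⟩ := exists_nodup_prefix_dup _ hnodup
        obtain ⟨xs, ys, rfl⟩ := List.append_of_mem hapre
        have hys : (a :: ys).Nodup := hpre.sublist (List.sublist_append_right _ _)
        -- i :: l = xs ++ a :: (ys ++ a :: post)
        rw [List.append_assoc, List.cons_append] at hv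
        cases xs with
        | nil =>
          -- i = a, l = ys ++ a :: post
          simp only [List.nil_append, List.cons_eq_cons] at hv
          obtain ⟨rfl, rfl⟩ := hv
          have hsplit : walkW w i ((ys ++ [i]) ++ post)
              = walkW w i (ys ++ [i]) + walkW w i post := by
            rw [walkW_append]
            congr 2
            rw [List.getLast_cons (by simp), List.getLast_append]; simp
          have hlen2 : post.length ≤ N := by
            have : (ys ++ i :: post).length ≤ N + 1 := hl
            simp at this; omega
          calc walkW w i (ys ++ i :: post)
              = walkW w i ((ys ++ [i]) ++ post) := by simp
            _ = walkW w i (ys ++ [i]) + walkW w i post := hsplit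
            _ ≤ 0 + walkW w i post := by
                have := hcyc i ys hys
                linarith
            _ = walkW w i post := by ring
            _ ≤ p i := ih post i hlen2
        | cons x xr =>
          -- i = x, l = xr ++ a :: ys ++ a :: post
          simp only [List.cons_append, List.cons_eq_cons] at hv
          obtain ⟨rfl, hl'⟩ := hv
          have h1 : walkW w i l
              = walkW w i (xr ++ [a]) + (walkW w a (ys ++ [a]) + walkW w a post) := by
            rw [hl']
            have e1 : xr ++ a :: (ys ++ a :: post) = (xr ++ [a]) ++ ((ys ++ [a]) ++ post) := by
              simp
            rw [e1, walkW_append, walkW_append]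
            have g1 : (i :: (xr ++ [a])).getLast (List.cons_ne_nil _ _) = a := by
              rw [List.getLast_cons (by simp), List.getLast_append]; simp
            rw [g1, walkW_append]
            have g2 : (a :: (ys ++ [a])).getLast (List.cons_ne_nil _ _) = a := by
              rw [List.getLast_cons (by simp), List.getLast_append]; simp
            rw [g2]
          have h2 : walkW w i ((xr ++ [a]) ++ post)
              = walkW w i (xr ++ [a]) + walkW w a post := by
            rw [walkW_append]
            congr 2
            rw [List.getLast_cons (by simp), List.getLast_append]; simp
          have hlen2 : ((xr ++ [a]) ++ post).length ≤ N := by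
            have : l.length ≤ N + 1 := hl
            rw [hl'] at this
            simp at this ⊢
            omega
          calc walkW w i l
              = walkW w i (xr ++ [a]) + (walkW w a (ys ++ [a]) + walkW w a post) := h1
            _ ≤ walkW w i (xr ++ [a]) + (0 + walkW w a post) := by
                have := hcyc a ys hys
                linarith
            _ = walkW w i ((xr ++ [a]) ++ post) := by rw [h2]; ring
            _ ≤ p i := ih _ i hlen2
  refine ⟨π, p, ?_, ?_⟩
  · intro i
    have := key 0 [] i (by simp)
    simpa [walkW] using this
  · intro i k
    -- p i ≥ w i k + p k
    obtain ⟨t0, -, ht0⟩ := Finset.exists_mem_eq_sup' hne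
      (fun t : Fin n → Fin n => walkW w k (List.ofFn t))
    have h1 : walkW w i (k :: List.ofFn t0) = w i k + p k := by
      rw [hpdef]
      simp only [walkW]
      rw [← ht0]
    have h2 : walkW w i (k :: List.ofFn t0) ≤ p i :=
      key (n + 1) _ i (by simp)
    have : w i k + p k ≤ p i := h1 ▸ h2
    simp only [hwdef] at this
    linarith
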